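/- For positive integers r, n and p with Re(p) sufficiently large, and |t| < 1, the Dirichlet series Σ_{k≥1} M_r(t;n,k)/k^{rp} equals (Li_{rp+r}(t)/ζ(rp+r))·σ_{−p}(n,r), where σ_p(n,r) := Σ_{d : d^r | n} d^{rp}. -/

import Mathlib

open Finset

/-- Cohen's `r`-Ramanujan sum. -/
noncomputable def ramcr (r n k : ℕ) : ℂ :=
  ∑ m ∈ (Finset.Icc 1 (k ^ r)).filter
      (fun m => ∀ d ∈ Finset.Icc 2 (k ^ r), ¬(d ^ r ∣ m ∧ d ^ r ∣ k ^ r)),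
    Complex.exp (2 * Real.pi * Complex.I * m * n / (k ^ r))

/-- `M_r(t;n,k) = (1/k^r) Σ_{d|k} c_r(n,k/d) t^d`. -/
noncomputable def neckr (r : ℕ) (t : ℂ) (n k : ℕ) : ℂ :=
  (1 / (k : ℂ) ^ r) * ∑ d ∈ k.divisors, ramcr r n (k / d) * t ^ d

-- binary: a^r ∣ m → b^r ∣ m → (lcm a b)^r ∣ m
lemma pow_lcm_dvd_aux {a b r m : ℕ} (hm : m ≠ 0) (h1 : a ^ r ∣ m) (h2 : b ^ r ∣ m) :
    (Nat.lcm a b) ^ r ∣ m := by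
  rcases Nat.eq_zero_or_pos r with rfl | hr
  · simpa using Nat.one_dvd m
  have ha : a ≠ 0 := by
    rintro rfl; rw [Nat.zero_pow hr] at h1; exact hm (Nat.eq_zero_of_zero_dvd h1)
  have hb : b ≠ 0 := by
    rintro rfl; rw [Nat.zero_pow hr] at h2; exact hm (Nat.eq_zero_of_zero_dvd h2)
  have hl : Nat.lcm a b ≠ 0 := Nat.lcm_ne_zero ha hb
  rw [← Nat.factorization_le_iff_dvd (pow_ne_zero _ ha) hm, Nat.factorization_pow] at h1
  rw [← Nat.factorization_le_iff_dvd (pow_ne_zero _ hb) hm, Nat.factorization_pow] at h2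
  rw [← Nat.factorization_le_iff_dvd (pow_ne_zero _ hl) hm, Nat.factorization_pow,
    Nat.factorization_lcm ha hb]
  intro p
  have h1p := h1 p
  have h2p := h2 p
  simp only [Finsupp.smul_apply, Finsupp.sup_apply, smul_eq_mul] at *
  rcases le_total (a.factorization p) (b.factorization p) with h | h
  · simpa [Nat.max_eq_right h] using h2p
  · simpa [Nat.max_eq_left h] using h1p

lemma pow_lcm_dvd_finset {r m : ℕ} (hm : m ≠ 0) (S : Finset ℕ)
    (h : ∀ d ∈ S, d ^ r ∣ m) : (S.lcm id) ^ r ∣ m := by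
  induction S using Finset.induction with
  | empty => simpa using Nat.one_dvd m
  | insert a T hnotmem ih =>
    rw [Finset.lcm_insert]
    rw [lcm_eq_nat_lcm]
    exact pow_lcm_dvd_aux hm (h a (Finset.mem_insert_self a T))
      (ih fun d hd => h d (Finset.mem_insert_of_mem hd))

open Classical in
lemma moebius_indicator {r k m : ℕ} (hr : r ≠ 0) (hk : k ≠ 0) (hm : m ≠ 0) :
    ∑ d ∈ k.divisors.filter (fun d => d ^ r ∣ m), ((ArithmeticFunction.moebius d : ℤ) : ℂ)
      = if (∀ d, 2 ≤ d → d ∣ k → ¬ d ^ r ∣ m) then 1 else 0 := by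
  set S := k.divisors.filter (fun d => d ^ r ∣ m) with hS
  set D := S.lcm _root_.id with hD
  have hDk : D ∣ k := Finset.lcm_dvd fun d hd => (Nat.mem_divisors.mp (Finset.mem_filter.mp hd).1).1
  have hDm : D ^ r ∣ m := pow_lcm_dvd_finset hm S fun d hd => (Finset.mem_filter.mp hd).2
  have hD0 : D ≠ 0 := fun h => hk (Nat.eq_zero_of_zero_dvd (h ▸ hDk))
  have hSD : S = D.divisors := by
    ext e
    rw [hS, Finset.mem_filter, Nat.mem_divisors, Nat.mem_divisors]
    constructor
    · rintro ⟨⟨hek, -⟩, herm⟩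
      refine ⟨?_, hD0⟩
      exact Finset.dvd_lcm (show e ∈ S by
        rw [hS, Finset.mem_filter, Nat.mem_divisors]; exact ⟨⟨hek, hk⟩, herm⟩)
    · rintro ⟨heD, -⟩
      exact ⟨⟨heD.trans hDk, hk⟩, (pow_dvd_pow_of_dvd heD r).trans hDm⟩
  have hsum : ∑ d ∈ D.divisors, ArithmeticFunction.moebius d = if D = 1 then 1 else 0 := by
    have h1 : (ArithmeticFunction.moebius * ArithmeticFunction.zeta : ArithmeticFunction ℤ) D
        = (1 : ArithmeticFunction ℤ) D := by
      rw [ArithmeticFunction.moebius_mul_coe_zeta]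
    rwa [ArithmeticFunction.coe_mul_zeta_apply, ArithmeticFunction.one_apply] at h1
  have hcast : ∑ d ∈ D.divisors, ((ArithmeticFunction.moebius d : ℤ) : ℂ)
      = if D = 1 then 1 else 0 := by
    rw [← Int.cast_sum, hsum]; split <;> simp
  have hiff : (∀ d, 2 ≤ d → d ∣ k → ¬ d ^ r ∣ m) ↔ D = 1 := by
    constructor
    · intro h
      have hDS : D ∈ S := by rw [hSD]; exact Nat.mem_divisors_self D hD0
      rw [hS, Finset.mem_filter, Nat.mem_divisors] at hDS
      by_contra hne
      have h2 : 2 ≤ D := by omega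
      exact h D h2 hDS.1.1 hDS.2
    · intro h d h2 hdk hdm
      have hdS : d ∈ S := by
        rw [hS, Finset.mem_filter, Nat.mem_divisors]; exact ⟨⟨hdk, hk⟩, hdm⟩
      rw [hSD, h, Nat.divisors_one, Finset.mem_singleton] at hdS
      omega
  rw [hSD, hcast]
  by_cases hc : ∀ d, 2 ≤ d → d ∣ k → ¬ d ^ r ∣ m
  · rw [if_pos hc, if_pos (hiff.mp hc)]
  · rw [if_neg hc, if_neg (fun h => hc (hiff.mpr h))]

lemma exp_full_sum (K n : ℕ) (hK : K ≠ 0) :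
    ∑ m ∈ Finset.Icc 1 K, Complex.exp (2 * Real.pi * Complex.I * m * n / K)
      = if K ∣ n then (K : ℂ) else 0 := by
  have hKC : (K : ℂ) ≠ 0 := Nat.cast_ne_zero.mpr hK
  set z : ℂ := Complex.exp (2 * Real.pi * Complex.I * n / K) with hz
  have hterm : ∀ m : ℕ, Complex.exp (2 * Real.pi * Complex.I * m * n / K) = z ^ m := by
    intro m
    rw [hz, ← Complex.exp_nat_mul]
    ring_nf
  have hzK : z ^ K = 1 := by
    rw [hz, ← Complex.exp_nat_mul]
    rw [Complex.exp_eq_one_iff]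
    exact ⟨n, by push_cast; field_simp⟩
  have hshift : ∑ m ∈ Finset.Icc 1 K, Complex.exp (2 * Real.pi * Complex.I * m * n / K)
      = ∑ m ∈ Finset.range K, z ^ (1 + m) := by
    rw [← Finset.Ico_add_one_right_eq_Icc, Finset.sum_Ico_eq_sum_range]
    simp only [hterm, Nat.add_sub_cancel]
  rw [hshift]
  by_cases hdvd : K ∣ n
  · have hz1 : z = 1 := by
      rw [hz, Complex.exp_eq_one_iff]
      obtain ⟨c, rfl⟩ := hdvd
      exact ⟨c, by push_cast; field_simp⟩
    simp [hz1, hdvd]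
  · have hz1 : z ≠ 1 := by
      intro h
      rw [hz, Complex.exp_eq_one_iff] at h
      obtain ⟨c, hc⟩ := h
      have h2pi : (2 * Real.pi * Complex.I : ℂ) ≠ 0 := by
        simp [Complex.I_ne_zero, Real.pi_ne_zero, Complex.ofReal_ne_zero]
      have hnc : (n : ℂ) = c * K := by
        have h3 : (2 * (Real.pi : ℂ) * Complex.I) * (n : ℂ)
            = (2 * (Real.pi : ℂ) * Complex.I) * (c * K) := by
          have hc' := hc
          field_simp at hc'
          linear_combination (2 * (Real.pi : ℂ) * Complex.I) * hc'
        exact mul_left_cancel₀ h2pi h3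
      have hnc' : (n : ℂ) = (K : ℂ) * c := by linear_combination hnc
      have hZ : (n : ℤ) = K * c := by exact_mod_cast hnc' 
      exact hdvd (Int.natCast_dvd_natCast.mp ⟨c, hZ⟩)
    simp only [pow_add, pow_one]
    rw [← Finset.mul_sum, geom_sum_eq hz1, hzK]
    simp [hdvd]

lemma exp_sub_sum (r n k d q : ℕ) (hk : k ≠ 0) (hq : q * d = k) :
    ∑ m ∈ (Finset.Icc 1 (k ^ r)).filter (fun m => d ^ r ∣ m),
        Complex.exp (2 * Real.pi * Complex.I * m * n / ((k : ℂ) ^ r))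
      = ∑ m' ∈ Finset.Icc 1 (q ^ r),
          Complex.exp (2 * Real.pi * Complex.I * m' * n / ((q : ℂ) ^ r)) := by
  have hd0 : d ≠ 0 := by rintro rfl; rw [mul_zero] at hq; exact hk hq.symm
  have hq0 : q ≠ 0 := by rintro rfl; rw [zero_mul] at hq; exact hk hq.symm
  have hdr : d ^ r ≠ 0 := pow_ne_zero _ hd0
  have hkr : q ^ r * d ^ r = k ^ r := by rw [← mul_pow, hq]
  have hset : (Finset.Icc 1 (k ^ r)).filter (fun m => d ^ r ∣ m)
      = (Finset.Icc 1 (q ^ r)).image (fun m' => d ^ r * m') := by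
    ext m
    simp only [Finset.mem_filter, Finset.mem_Icc, Finset.mem_image]
    constructor
    · rintro ⟨⟨h1, h2⟩, c, rfl⟩
      refine ⟨c, ⟨?_, ?_⟩, rfl⟩
      · rcases Nat.eq_zero_or_pos c with rfl | h; · omega
        omega
      · have h2' : c * d ^ r ≤ q ^ r * d ^ r := by
          rw [hkr, mul_comm]; exact h2
        exact Nat.le_of_mul_le_mul_right h2' (Nat.pos_of_ne_zero hdr)
    · rintro ⟨c, ⟨h1, h2⟩, rfl⟩
      refine ⟨⟨?_, ?_⟩, Dvd.intro c rfl⟩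
      · have := Nat.pos_of_ne_zero hdr; nlinarith
      · calc d ^ r * c ≤ d ^ r * q ^ r := Nat.mul_le_mul_left _ h2
          _ = k ^ r := by rw [mul_comm]; exact hkr
  have hinj : ∀ a ∈ Finset.Icc 1 (q ^ r), ∀ b ∈ Finset.Icc 1 (q ^ r),
      d ^ r * a = d ^ r * b → a = b := fun a _ b _ h =>
    Nat.eq_of_mul_eq_mul_left (Nat.pos_of_ne_zero hdr) h
  rw [hset, Finset.sum_image hinj]
  refine Finset.sum_congr rfl fun m' _ => ?_
  congr 1
  have hcast : (k : ℂ) ^ r = (q : ℂ) ^ r * (d : ℂ) ^ r := by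
    rw [← mul_pow]; norm_cast; rw [hq]
  have hqC : ((q : ℂ)) ^ r ≠ 0 := pow_ne_zero _ (Nat.cast_ne_zero.mpr hq0)
  have hdC : ((d : ℂ)) ^ r ≠ 0 := pow_ne_zero _ (Nat.cast_ne_zero.mpr hd0)
  rw [hcast]
  push_cast
  field_simp

lemma exp_full_sum' (q n r : ℕ) (hq : q ≠ 0) :
    ∑ m ∈ Finset.Icc 1 (q ^ r), Complex.exp (2 * Real.pi * Complex.I * m * n / ((q : ℂ) ^ r))
      = if q ^ r ∣ n then ((q : ℂ)) ^ r else 0 := by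
  have h := exp_full_sum (q ^ r) n (pow_ne_zero r hq)
  simp only [Nat.cast_pow] at h
  exact h

lemma ramcr_eq (r n k : ℕ) (hr : r ≠ 0) (hk : k ≠ 0) :
    ramcr r n k = ∑ e ∈ k.divisors, ((ArithmeticFunction.moebius (k / e) : ℤ) : ℂ) *
      (if e ^ r ∣ n then ((e : ℂ)) ^ r else 0) := by
  classical
  have hkpos : 0 < k := Nat.pos_of_ne_zero hk
  -- Step 1: indicator rewrite
  have step1 : ramcr r n k = ∑ m ∈ Finset.Icc 1 (k ^ r),
      (∑ e ∈ k.divisors.filter (fun e => e ^ r ∣ m), ((ArithmeticFunction.moebius e : ℤ) : ℂ))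
        * Complex.exp (2 * Real.pi * Complex.I * m * n / ((k : ℂ) ^ r)) := by
    rw [ramcr, Finset.sum_filter]
    refine Finset.sum_congr rfl fun m hm => ?_
    rw [Finset.mem_Icc] at hm
    have hm0 : m ≠ 0 := by omega
    have hcond : (∀ d ∈ Finset.Icc 2 (k ^ r), ¬(d ^ r ∣ m ∧ d ^ r ∣ k ^ r))
        ↔ (∀ d, 2 ≤ d → d ∣ k → ¬ d ^ r ∣ m) := by
      constructor
      · intro h d h2 hdk hdm
        have hdle : d ≤ k := Nat.le_of_dvd hkpos hdk
        have hkk : k ≤ k ^ r := Nat.le_self_pow hr k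
        exact h d (Finset.mem_Icc.mpr ⟨h2, by omega⟩) ⟨hdm, pow_dvd_pow_of_dvd hdk r⟩
      · intro h d hd ⟨hdm, hdk⟩
        rw [Finset.mem_Icc] at hd
        exact h d hd.1 ((Nat.pow_dvd_pow_iff hr).mp hdk) hdm
    rw [if_congr hcond rfl rfl]
    rw [moebius_indicator hr hk hm0]
    split <;> simp
  rw [step1]
  -- Step 2: expand the inner filtered sum and swap
  have step2 : ∀ m ∈ Finset.Icc 1 (k ^ r),
      (∑ e ∈ k.divisors.filter (fun e => e ^ r ∣ m), ((ArithmeticFunction.moebius e : ℤ) : ℂ))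
        * Complex.exp (2 * Real.pi * Complex.I * m * n / ((k : ℂ) ^ r))
      = ∑ e ∈ k.divisors, (if e ^ r ∣ m then
          ((ArithmeticFunction.moebius e : ℤ) : ℂ)
            * Complex.exp (2 * Real.pi * Complex.I * m * n / ((k : ℂ) ^ r)) else 0) := by
    intro m _
    rw [Finset.sum_filter, Finset.sum_mul]
    refine Finset.sum_congr rfl fun e _ => ?_
    split <;> simp
  rw [Finset.sum_congr rfl step2, Finset.sum_comm]
  have step3 : ∀ e ∈ k.divisors,
      (∑ m ∈ Finset.Icc 1 (k ^ r), (if e ^ r ∣ m then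
          ((ArithmeticFunction.moebius e : ℤ) : ℂ)
            * Complex.exp (2 * Real.pi * Complex.I * m * n / ((k : ℂ) ^ r)) else 0))
      = ((ArithmeticFunction.moebius e : ℤ) : ℂ) *
          (if (k / e) ^ r ∣ n then (((k / e : ℕ) : ℂ)) ^ r else 0) := by
    intro e he
    rw [Nat.mem_divisors] at he
    have hq0 : k / e ≠ 0 := by
      have h2 := Nat.div_mul_cancel he.1
      intro h; rw [h, zero_mul] at h2; exact hk h2.symm
    rw [← Finset.sum_filter, ← Finset.mul_sum,
      exp_sub_sum r n k e (k / e) hk (Nat.div_mul_cancel he.1),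
      exp_full_sum' (k / e) n r hq0]
  rw [Finset.sum_congr rfl step3,
    ← Nat.sum_div_divisors k (fun e => ((ArithmeticFunction.moebius (k / e) : ℤ) : ℂ) *
      (if e ^ r ∣ n then ((e : ℂ)) ^ r else 0))]
  refine Finset.sum_congr rfl fun d hd => ?_
  rw [Nat.div_div_self (Nat.mem_divisors.mp hd).1 hk]

open scoped LSeries.notation

/-- `Σ_{k≥1} M_r(t;n,k)/k^{rp} = (Li_{rp+r}(t)/ζ(rp+r))·σ_{-p}(n,r)`, where
`σ_p(n,r) = Σ_{d^r | n} d^{rp}`. -/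
theorem stmt15 (r n : ℕ) (hr : 0 < r) (hn : 0 < n) (p : ℂ) (hp : 1 < p.re)
    (t : ℂ) (ht : ‖t‖ < 1) :
    ∑' k : ℕ, neckr r t n (k + 1) / ((k : ℂ) + 1) ^ ((r : ℂ) * p)
      = ((∑' k : ℕ, t ^ (k + 1) / ((k : ℂ) + 1) ^ ((r : ℂ) * p + r))
            / riemannZeta ((r : ℂ) * p + r))
        * ∑ d ∈ n.divisors.filter (fun d => d ^ r ∣ n), (d : ℂ) ^ (-((r : ℂ) * p)) := by
  classical
  have hr0 : r ≠ 0 := hr.ne'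
  have hn0 : n ≠ 0 := hn.ne'
  set s : ℂ := (r : ℂ) * p + r with hs
  have hsre : 1 < s.re := by
    have h1 : s.re = r * p.re + r := by
      simp [hs, Complex.add_re, Complex.mul_re]
    have h2 : (1 : ℝ) ≤ r := by exact_mod_cast hr
    rw [h1]; nlinarith
  set f : ℕ → ℂ := fun e => if e ^ r ∣ n then (e : ℂ) ^ r else 0 with hf
  set g : ℕ → ℂ := fun d => t ^ d with hg
  set muC : ℕ → ℂ := fun d => ((ArithmeticFunction.moebius d : ℤ) : ℂ) with hmu
  have Smu : LSeriesSummable muC s :=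
    ArithmeticFunction.LSeriesSummable_moebius_iff.mpr hsre
  have Sf : LSeriesSummable f s := by
    refine summable_of_ne_finset_zero (s := Finset.range (n + 1)) fun k hk => ?_
    rw [Finset.mem_range, not_lt] at hk
    have hk0 : k ≠ 0 := by omega
    rw [LSeries.term_of_ne_zero hk0]
    have hnd : ¬ k ^ r ∣ n := fun h => by
      have h1 : k ≤ k ^ r := Nat.le_self_pow hr0 k
      have h2 : k ^ r ≤ n := Nat.le_of_dvd hn h
      omega
    simp [hf, hnd]
  have Sg : LSeriesSummable g s := by
    have hgeo : Summable (fun k : ℕ => ‖t‖ ^ k) :=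
      summable_geometric_of_lt_one (norm_nonneg t) ht
    refine Summable.of_norm_bounded hgeo fun k => ?_
    rcases eq_or_ne k 0 with rfl | hk0
    · simp
    · rw [LSeries.term_of_ne_zero hk0, norm_div]
      have h1 : 1 ≤ ‖(k : ℂ) ^ s‖ := by
        rw [Complex.norm_natCast_cpow_of_pos (Nat.pos_of_ne_zero hk0)]
        exact Real.one_le_rpow (by exact_mod_cast Nat.one_le_iff_ne_zero.mpr hk0)
          (by linarith)
      calc ‖g k‖ / ‖(k : ℂ) ^ s‖ ≤ ‖g k‖ := div_le_self (norm_nonneg _) h1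
        _ = ‖t‖ ^ k := by
            rw [hg]; simp
  have hmuf : ∀ m : ℕ, m ≠ 0 → (muC ⍟ f) m = ramcr r n m := by
    intro m hm
    rw [LSeries.convolution_def, ramcr_eq r n m hr0 hm]
    exact (Nat.sum_divisorsAntidiagonal' (f := fun a b => muC a * f b)).symm ▸ rfl
  -- LHS = LSeries ((muC ⍟ f) ⍟ g) s
  have hsumconv : LSeriesSummable ((muC ⍟ f) ⍟ g) s := (Smu.convolution Sf).convolution Sg
  have hLHS : ∑' k : ℕ, neckr r t n (k + 1) / ((k : ℂ) + 1) ^ ((r : ℂ) * p)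
      = LSeries ((muC ⍟ f) ⍟ g) s := by
    rw [LSeries, Summable.tsum_eq_zero_add hsumconv, LSeries.term_zero, zero_add]
    refine tsum_congr fun k => ?_
    have hk0 : (k + 1 : ℕ) ≠ 0 := Nat.succ_ne_zero k
    rw [LSeries.term_of_ne_zero hk0]
    have hKC : ((k + 1 : ℕ) : ℂ) ≠ 0 := Nat.cast_ne_zero.mpr hk0
    have hval : ((muC ⍟ f) ⍟ g) (k + 1)
        = ∑ d ∈ (k + 1 : ℕ).divisors, ramcr r n ((k + 1) / d) * t ^ d := by
      rw [LSeries.convolution_def]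
      show ∑ q ∈ (k + 1 : ℕ).divisorsAntidiagonal, (muC ⍟ f) q.1 * g q.2 = _
      rw [Nat.sum_divisorsAntidiagonal' (f := fun a b => (muC ⍟ f) a * g b)]
      refine Finset.sum_congr rfl fun d hd => ?_
      have hd0 : (k + 1) / d ≠ 0 :=
        Nat.div_ne_zero_iff.mpr ⟨(Nat.pos_of_mem_divisors hd).ne',
          (Nat.le_of_dvd (Nat.succ_pos k) (Nat.mem_divisors.mp hd).1)⟩
      rw [hmuf _ hd0]
    rw [hval]
    have hneck : neckr r t n (k + 1)
        = (1 / ((k + 1 : ℕ) : ℂ) ^ r) * ∑ d ∈ (k + 1 : ℕ).divisors,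
            ramcr r n ((k + 1) / d) * t ^ d := by
      rw [neckr]
    rw [hneck]
    have hcpow : ((k + 1 : ℕ) : ℂ) ^ s = ((k + 1 : ℕ) : ℂ) ^ ((r : ℂ) * p)
        * ((k + 1 : ℕ) : ℂ) ^ r := by
      rw [hs, Complex.cpow_add _ _ hKC, Complex.cpow_natCast]
    have h1 : ((k + 1 : ℕ) : ℂ) ^ ((r : ℂ) * p) ≠ 0 := by
      rw [Complex.cpow_def_of_ne_zero hKC]; exact Complex.exp_ne_zero _
    have h2 : ((k + 1 : ℕ) : ℂ) ^ r ≠ 0 := pow_ne_zero _ hKC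
    rw [hcpow]
    have hcast : ((k : ℂ) + 1) = ((k + 1 : ℕ) : ℂ) := by push_cast; ring
    rw [hcast]
    field_simp
  rw [hLHS, LSeries_convolution' (Smu.convolution Sf) Sg, LSeries_convolution' Smu Sf]
  -- identify L muC s
  have hzeta : riemannZeta s ≠ 0 := riemannZeta_ne_zero_of_one_lt_re hsre
  have hLmu : LSeries muC s = (riemannZeta s)⁻¹ := by
    have h1 := LSeries_one_mul_Lseries_moebius hsre
    rw [LSeries_one_eq_riemannZeta hsre] at h1
    exact eq_inv_of_mul_eq_one_right h1
  -- identify L g s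
  have hLg : LSeries g s = ∑' k : ℕ, t ^ (k + 1) / ((k : ℂ) + 1) ^ s := by
    rw [LSeries, Summable.tsum_eq_zero_add Sg, LSeries.term_zero, zero_add]
    refine tsum_congr fun k => ?_
    rw [LSeries.term_of_ne_zero (Nat.succ_ne_zero k)]
    have hcast : ((k + 1 : ℕ) : ℂ) = ((k : ℂ) + 1) := by push_cast; ring
    rw [hcast, hg]
  -- identify L f s
  have hLf : LSeries f s
      = ∑ d ∈ n.divisors.filter (fun d => d ^ r ∣ n), (d : ℂ) ^ (-((r : ℂ) * p)) := by
    rw [LSeries]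
    rw [tsum_eq_sum (s := n.divisors.filter (fun d => d ^ r ∣ n)) ?_]
    · refine Finset.sum_congr rfl fun d hd => ?_
      rw [Finset.mem_filter, Nat.mem_divisors] at hd
      have hd0 : d ≠ 0 := fun h => hn0 (Nat.eq_zero_of_zero_dvd (h ▸ hd.1.1))
      have hdC : (d : ℂ) ≠ 0 := Nat.cast_ne_zero.mpr hd0
      rw [LSeries.term_of_ne_zero hd0]
      have hfd : f d = (d : ℂ) ^ r := by rw [hf]; simp [hd.2]
      rw [hfd, hs, Complex.cpow_add _ _ hdC, Complex.cpow_natCast, Complex.cpow_neg]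
      have h1 : (d : ℂ) ^ ((r : ℂ) * p) ≠ 0 := by
        rw [Complex.cpow_def_of_ne_zero hdC]; exact Complex.exp_ne_zero _
      have h2 : (d : ℂ) ^ r ≠ 0 := pow_ne_zero _ hdC
      field_simp
    · intro k hk
      rcases eq_or_ne k 0 with rfl | hk0
      · exact LSeries.term_zero ..
      · rw [LSeries.term_of_ne_zero hk0]
        have hfk : f k = 0 := by
          rw [hf]
          have : ¬ k ^ r ∣ n := fun h => hk (Finset.mem_filter.mpr
            ⟨Nat.mem_divisors.mpr ⟨(dvd_pow_self k hr0).trans h, hn0⟩, h⟩)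
          simp [this]
        rw [hfk, zero_div]
  rw [hLmu, hLg, hLf]
  field_simp
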